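/- Let n ≥ 2, let W ⊆ ℝⁿ be open, p ∈ W, and let ξ : W → ℝⁿ be a C¹ vector field with ξ(p) ≠ 0. Let f², …, fⁿ : W → ℝ be C¹ solutions of the homogeneous equation Σ_α ξ^α(x) ∂f^i/∂x^α(x) = 0 whose differentials df²(p), …, dfⁿ(p) are linearly independent. Then for every C¹ function h : W → ℝ satisfying Σ_α ξ^α(x) ∂h/∂x^α(x) = 0 on W, there exist an open neighbourhood V of p with V ⊆ W and a function Φ : ℝ^{n−1} → ℝ such that h(x) = Φ(f²(x), …, fⁿ(x)) for all x ∈ V. -/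

import Mathlib

open Set

/-- Partial derivative `∂φ/∂xⁱ` of a scalar function on `ℝⁿ`. -/
noncomputable def pd {n : ℕ} (i : Fin n) (φ : (Fin n → ℝ) → ℝ) (x : Fin n → ℝ) : ℝ :=
  fderiv ℝ φ x (Pi.single i 1)

open Filter Metric Topology

set_option maxHeartbeats 1000000

/-- Any continuous linear functional on `ℝⁿ` is determined by its values on
the standard basis. -/
lemma clm_apply_eq_sum_single {n : ℕ} (D : (Fin n → ℝ) →L[ℝ] ℝ) (v : Fin n → ℝ) :
    D v = ∑ α, v α * D (Pi.single α 1) := by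
  have hv : v = ∑ α, v α • (Pi.single α (1 : ℝ) : Fin n → ℝ) := by
    ext j
    simp [Pi.single_apply, Finset.sum_apply, mul_ite]
  conv_lhs => rw [hv]
  rw [map_sum]
  simp [smul_eq_mul]

/-- Key claim in the proof of Proposition 2: every `C¹` first integral `h` of the
vector field `ξ` is locally a functional composition `Φ(f², …, fⁿ)` of `n − 1`
functionally independent first integrals `f², …, fⁿ`. -/
theorem first_integral_is_function_of_independent_integrals
    (n : ℕ) (hn : 2 ≤ n)
    (W : Set (Fin n → ℝ)) (hW : IsOpen W) (p : Fin n → ℝ) (hp : p ∈ W)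
    (ξ : (Fin n → ℝ) → (Fin n → ℝ)) (hξ : ContDiffOn ℝ 1 ξ W) (hξp : ξ p ≠ 0)
    (f : Fin (n - 1) → (Fin n → ℝ) → ℝ)
    (hf : ∀ i, ContDiffOn ℝ 1 (f i) W)
    (hfsol : ∀ i, ∀ x ∈ W, ∑ α, ξ x α * pd α (f i) x = 0)
    (hind : LinearIndependent ℝ (fun i : Fin (n - 1) => fderiv ℝ (f i) p))
    (h : (Fin n → ℝ) → ℝ) (hh : ContDiffOn ℝ 1 h W)
    (hhsol : ∀ x ∈ W, ∑ α, ξ x α * pd α h x = 0) :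
    ∃ (V : Set (Fin n → ℝ)), IsOpen V ∧ p ∈ V ∧ V ⊆ W ∧
      ∃ Φ : (Fin (n - 1) → ℝ) → ℝ, ∀ x ∈ V, h x = Φ (fun i => f i x) := by
  classical
  have hmemW : W ∈ 𝓝 p := hW.mem_nhds hp
  -- basic differentiability facts
  have hfd : ∀ i, ∀ x ∈ W, DifferentiableAt ℝ (f i) x := fun i x hx =>
    ((hf i).contDiffAt (hW.mem_nhds hx)).differentiableAt one_ne_zero
  have hhd : ∀ x ∈ W, DifferentiableAt ℝ h x := fun x hx =>
    (hh.contDiffAt (hW.mem_nhds hx)).differentiableAt one_ne_zero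
  -- first integrals, in terms of the full differential
  have hker : ∀ i, ∀ x ∈ W, fderiv ℝ (f i) x (ξ x) = 0 := by
    intro i x hx
    rw [clm_apply_eq_sum_single]
    simpa [pd] using hfsol i x hx
  have hkerh : ∀ x ∈ W, fderiv ℝ h x (ξ x) = 0 := by
    intro x hx
    rw [clm_apply_eq_sum_single]
    simpa [pd] using hhsol x hx
  -- dimension of the dual space
  haveI : FiniteDimensional ℝ ((Fin n → ℝ) →L[ℝ] ℝ) :=
    LinearEquiv.finiteDimensional
      (LinearMap.toContinuousLinearMap : ((Fin n → ℝ) →ₗ[ℝ] ℝ) ≃ₗ[ℝ] _)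
  have hdual : Module.finrank ℝ ((Fin n → ℝ) →L[ℝ] ℝ) = n := by
    rw [← (LinearMap.toContinuousLinearMap :
        ((Fin n → ℝ) →ₗ[ℝ] ℝ) ≃ₗ[ℝ] ((Fin n → ℝ) →L[ℝ] ℝ)).finrank_eq,
      Module.finrank_linearMap, Module.finrank_fin_fun, Module.finrank_self, mul_one]
  -- choose a covector `c` complementary to the differentials of the `f i`
  obtain ⟨c, hc⟩ : ∃ c : (Fin n → ℝ) →L[ℝ] ℝ,
      c ∉ Submodule.span ℝ (Set.range fun i => fderiv ℝ (f i) p) := by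
    by_contra hcon
    push_neg at hcon
    have htop : Submodule.span ℝ (Set.range fun i => fderiv ℝ (f i) p) = ⊤ :=
      Submodule.eq_top_iff'.mpr hcon
    have h1 : Module.finrank ℝ
        (Submodule.span ℝ (Set.range fun i => fderiv ℝ (f i) p)) = n - 1 := by
      rw [finrank_span_eq_card hind, Fintype.card_fin]
    rw [htop, finrank_top, hdual] at h1
    omega
  have hindc : LinearIndependent ℝ
      (Fin.cons c (fun i => fderiv ℝ (f i) p) : Fin (n - 1 + 1) → _) :=
    hind.fin_cons hc
  have hspanc : Submodule.span ℝ
      (Set.range (Fin.cons c (fun i => fderiv ℝ (f i) p) : Fin (n - 1 + 1) → _)) = ⊤ := by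
    apply Submodule.eq_top_of_finrank_eq
    rw [finrank_span_eq_card hindc, Fintype.card_fin, hdual]
    omega
  -- the family `c, df i p` has trivial common kernel
  have hinj0 : ∀ v : Fin n → ℝ, c v = 0 → (∀ i, fderiv ℝ (f i) p v = 0) → v = 0 := by
    intro v hcv hLv
    have hall : ∀ φ : (Fin n → ℝ) →L[ℝ] ℝ, φ v = 0 := by
      intro φ
      have hφ : φ ∈ Submodule.span ℝ
          (Set.range (Fin.cons c (fun i => fderiv ℝ (f i) p) : Fin (n - 1 + 1) → _)) := by
        rw [hspanc]; trivial
      induction hφ using Submodule.span_induction with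
      | mem ψ hψ =>
        obtain ⟨j, rfl⟩ := hψ
        refine Fin.cases ?_ ?_ j
        · simpa using hcv
        · intro i; simpa using hLv i
      | zero => simp
      | add ψ χ _ _ h1 h2 => simp [h1, h2]
      | smul a ψ _ h1 => simp [h1]
    funext α
    simpa using hall (ContinuousLinearMap.proj α)
  -- the candidate differential of the straightening map
  set A : (Fin n → ℝ) → ((Fin n → ℝ) →L[ℝ] ℝ × (Fin (n - 1) → ℝ)) :=
    fun x => c.prod (ContinuousLinearMap.pi fun i => fderiv ℝ (f i) x) with hAdef
  have hAapp : ∀ x u, A x u = (c u, fun i => fderiv ℝ (f i) x u) := by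
    intro x u; rw [hAdef]; rfl
  have hfinE : Module.finrank ℝ (Fin n → ℝ) = n := Module.finrank_fin_fun ℝ
  have hfinP : Module.finrank ℝ (ℝ × (Fin (n - 1) → ℝ)) = n := by
    rw [Module.finrank_prod, Module.finrank_self, Module.finrank_fin_fun]
    omega
  have hbij_of_inj : ∀ x, Function.Injective (A x) → Function.Bijective (A x) := by
    intro x hinj
    refine ⟨hinj, ?_⟩
    exact (LinearMap.injective_iff_surjective_of_finrank_eq_finrank
      (hfinE.trans hfinP.symm) (f := ((A x : (Fin n → ℝ) →ₗ[ℝ] _)))).mp hinj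
  -- `A p` is bijective
  have hApinj : Function.Injective (A p) := by
    intro v w hvw
    have hzero : A p (v - w) = 0 := by rw [map_sub, hvw, sub_self]
    rw [hAapp] at hzero
    have h1 : c (v - w) = 0 := congrArg Prod.fst hzero
    have h2 : ∀ i, fderiv ℝ (f i) p (v - w) = 0 := fun i =>
      congrFun (congrArg Prod.snd hzero) i
    have := hinj0 _ h1 h2
    exact sub_eq_zero.mp this
  have hApbij : Function.Bijective (A p) := hbij_of_inj p hApinj
  -- upgrading bijective `A x` to a continuous linear equivalence
  have hBex : ∀ x : Fin n → ℝ, Function.Bijective (A x) →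
      ∃ B : (Fin n → ℝ) ≃L[ℝ] ℝ × (Fin (n - 1) → ℝ),
        (B : (Fin n → ℝ) →L[ℝ] ℝ × (Fin (n - 1) → ℝ)) = A x := by
    intro x hbij
    refine ⟨(LinearEquiv.ofBijective ((A x : (Fin n → ℝ) →ₗ[ℝ] _)) hbij).toContinuousLinearEquiv,
      ?_⟩
    apply ContinuousLinearMap.ext
    intro v
    rw [ContinuousLinearEquiv.coe_coe, LinearEquiv.coe_toContinuousLinearEquiv']
    rfl
  obtain ⟨Bp, hBp⟩ := hBex p hApbij
  -- quantitative injectivity constant at `p`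
  set K : ℝ := ‖(Bp.symm : ℝ × (Fin (n - 1) → ℝ) →L[ℝ] (Fin n → ℝ))‖ with hKdef
  have hK : 0 ≤ K := norm_nonneg _
  have hKbound : ∀ v : Fin n → ℝ, ‖v‖ ≤ K * ‖A p v‖ := by
    intro v
    have h1 : v = Bp.symm (A p v) := by rw [← hBp]; simp
    calc ‖v‖ = ‖Bp.symm (A p v)‖ := by rw [← h1]
      _ ≤ K * ‖A p v‖ :=
        (Bp.symm : ℝ × (Fin (n - 1) → ℝ) →L[ℝ] (Fin n → ℝ)).le_opNorm _
  set δ : ℝ := 1 / (2 * (K + 1)) with hδdef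
  have hδ : 0 < δ := by positivity
  have hKδ : K * δ < 1 := by
    rw [hδdef]
    rw [mul_one_div, div_lt_one (by positivity)]
    linarith
  -- the set of "good" points is a neighbourhood of p
  have hgood : ∀ᶠ x in 𝓝 p, x ∈ W ∧ ξ x ≠ 0 ∧ Function.Bijective (A x) := by
    have h1 : ∀ᶠ x in 𝓝 p, x ∈ W := hmemW
    have h2 : ∀ᶠ x in 𝓝 p, ξ x ≠ 0 :=
      (hξ.continuousOn.continuousAt hmemW).eventually_ne hξp
    have h3 : ∀ᶠ x in 𝓝 p, ∀ i, ‖fderiv ℝ (f i) x - fderiv ℝ (f i) p‖ < δ := by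
      rw [eventually_all]
      intro i
      have hci : ContinuousAt (fun x => fderiv ℝ (f i) x) p :=
        (((hf i).continuousOn_fderiv_of_isOpen hW le_rfl).continuousAt hmemW)
      have hball := Metric.tendsto_nhds.mp hci δ hδ
      exact hball.mono fun x hx => by rwa [dist_eq_norm] at hx
    filter_upwards [h1, h2, h3] with x hx1 hx2 hx3
    refine ⟨hx1, hx2, hbij_of_inj x ?_⟩
    intro v w hvw
    have hsub : A x (v - w) = 0 := by rw [map_sub, hvw, sub_self]
    have hop : ‖A p - A x‖ ≤ δ := by
      refine ContinuousLinearMap.opNorm_le_bound _ hδ.le fun u => ?_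
      have hcompu : (A p - A x) u =
          ((0 : ℝ), fun i => (fderiv ℝ (f i) p - fderiv ℝ (f i) x) u) := by
        rw [ContinuousLinearMap.sub_apply, hAapp, hAapp]
        ext <;> simp
      rw [hcompu, Prod.norm_def]
      simp only [norm_zero]
      rw [max_eq_right (norm_nonneg _)]
      refine (pi_norm_le_iff_of_nonneg (by positivity)).mpr fun i => ?_
      calc ‖(fderiv ℝ (f i) p - fderiv ℝ (f i) x) u‖
          ≤ ‖fderiv ℝ (f i) p - fderiv ℝ (f i) x‖ * ‖u‖ :=
            ContinuousLinearMap.le_opNorm _ _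
        _ ≤ δ * ‖u‖ := by
            have := (hx3 i).le
            rw [norm_sub_rev] at this
            exact mul_le_mul_of_nonneg_right this (norm_nonneg _)
    by_contra hne
    have hpos : 0 < ‖v - w‖ := by
      rw [norm_pos_iff]
      exact sub_ne_zero.mpr hne
    have hApvw : ‖A p (v - w)‖ ≤ δ * ‖v - w‖ := by
      have heq : A p (v - w) = (A p - A x) (v - w) := by
        rw [ContinuousLinearMap.sub_apply, hsub, sub_zero]
      rw [heq]
      exact ContinuousLinearMap.le_of_opNorm_le _ hop _
    have hchain : ‖v - w‖ ≤ K * (δ * ‖v - w‖) :=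
      le_trans (hKbound _) (mul_le_mul_of_nonneg_left hApvw hK)
    nlinarith
  -- the derivative of the straightening map G
  have hGd : ∀ x ∈ W, HasFDerivAt (fun x => (c x, fun i => f i x)) (A x) x := by
    intro x hx
    rw [hAdef]
    exact HasFDerivAt.prodMk c.hasFDerivAt (hasFDerivAt_pi.mpr fun i => (hfd i x hx).hasFDerivAt)
  -- inverse function theorem at p
  have hGsp : HasStrictFDerivAt (fun x => (c x, fun i => f i x))
      (Bp : (Fin n → ℝ) →L[ℝ] ℝ × (Fin (n - 1) → ℝ)) p := by
    refine ContDiffAt.hasStrictFDerivAt' ?_ ?_ one_ne_zero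
    · exact ContDiffAt.prodMk c.contDiff.contDiffAt
        (contDiffAt_pi.mpr fun i => (hf i).contDiffAt hmemW)
    · rw [hBp]; exact hGd p hp
  set Ψ := hGsp.toOpenPartialHomeomorph _ with hΨdef
  have hΨcoe : ⇑Ψ = (fun x => (c x, fun i => f i x)) := hGsp.toOpenPartialHomeomorph_coe
  have hpsrc : p ∈ Ψ.source := hGsp.mem_toOpenPartialHomeomorph_source
  have hGpt : ((c p, fun i => f i p) : ℝ × (Fin (n - 1) → ℝ)) ∈ Ψ.target := by
    have := Ψ.map_source hpsrc
    rw [hΨcoe] at this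
    exact this
  have hsymmp : Ψ.symm (c p, fun i => f i p) = p := by
    have := Ψ.left_inv hpsrc
    rw [hΨcoe] at this
    exact this
  -- choose a good ball inside the target
  have hpregood : {y : ℝ × (Fin (n - 1) → ℝ) |
      Ψ.symm y ∈ W ∧ ξ (Ψ.symm y) ≠ 0 ∧ Function.Bijective (A (Ψ.symm y))} ∈
      𝓝 ((c p, fun i => f i p) : ℝ × (Fin (n - 1) → ℝ)) := by
    have htend : Filter.Tendsto Ψ.symm
        (𝓝 ((c p, fun i => f i p) : ℝ × (Fin (n - 1) → ℝ))) (𝓝 p) := by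
      have := Ψ.continuousAt_symm hGpt
      rwa [ContinuousAt, hsymmp] at this
    exact htend hgood
  obtain ⟨r, hr0, hrball⟩ : ∃ r > 0, Metric.ball ((c p, fun i => f i p) :
      ℝ × (Fin (n - 1) → ℝ)) r ⊆ Ψ.target ∩ {y | Ψ.symm y ∈ W ∧ ξ (Ψ.symm y) ≠ 0 ∧
      Function.Bijective (A (Ψ.symm y))} :=
    Metric.mem_nhds_iff.mp (Filter.inter_mem (Ψ.open_target.mem_nhds hGpt) hpregood)
  -- the neighbourhood V
  set V : Set (Fin n → ℝ) := Ψ.source ∩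
    (fun x => ((c x, fun i => f i x) : ℝ × (Fin (n - 1) → ℝ))) ⁻¹'
      Metric.ball (c p, fun i => f i p) r with hVdef
  have hVopen : IsOpen V := by
    have hcont := Ψ.continuousOn
    rw [hΨcoe] at hcont
    exact hcont.isOpen_inter_preimage Ψ.open_source Metric.isOpen_ball
  have hpV : p ∈ V := ⟨hpsrc, Metric.mem_ball_self hr0⟩
  have hVsymm : ∀ x ∈ V, Ψ.symm ((c x, fun i => f i x) : ℝ × (Fin (n - 1) → ℝ)) = x := by
    intro x hx
    have := Ψ.left_inv hx.1
    rw [hΨcoe] at this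
    exact this
  have hVW : V ⊆ W := by
    intro x hx
    have hgd := (hrball hx.2).2
    simp only [Set.mem_setOf_eq] at hgd
    rw [hVsymm x hx] at hgd
    exact hgd.1
  -- key step: h is constant on level sets of (f i) inside V
  have key : ∀ x ∈ V, ∀ x' ∈ V, (fun i => f i x) = (fun i => f i x') → h x = h x' := by
    intro x hx x' hx' hff
    set z : Fin (n - 1) → ℝ := fun i => f i x with hz
    set s : Set ℝ := {t | ((t, z) : ℝ × (Fin (n - 1) → ℝ)) ∈
        Metric.ball (c p, fun i => f i p) r} with hs
    have hsopen : IsOpen s := by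
      have hcont : Continuous (fun t : ℝ => ((t, z) : ℝ × (Fin (n - 1) → ℝ))) :=
        continuous_id.prodMk continuous_const
      exact Metric.isOpen_ball.preimage hcont
    have hsconv : Convex ℝ s := by
      intro t1 h1 t2 h2 a b ha hb hab
      have h1' : ((t1, z) : ℝ × (Fin (n - 1) → ℝ)) ∈ Metric.ball (c p, fun i => f i p) r := h1
      have h2' : ((t2, z) : ℝ × (Fin (n - 1) → ℝ)) ∈ Metric.ball (c p, fun i => f i p) r := h2
      have hcomb := convex_ball ((c p, fun i => f i p) : ℝ × (Fin (n - 1) → ℝ)) r h1' h2' ha hb hab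
      have hrw : (a • ((t1, z) : ℝ × (Fin (n - 1) → ℝ)) + b • (t2, z)) =
          ((a • t1 + b • t2, z) : ℝ × (Fin (n - 1) → ℝ)) := by
        rw [Prod.smul_mk, Prod.smul_mk, Prod.mk_add_mk, ← add_smul, hab, one_smul]
      show ((a • t1 + b • t2, z) : ℝ × (Fin (n - 1) → ℝ)) ∈ Metric.ball (c p, fun i => f i p) r
      rwa [hrw] at hcomb
    -- the function h ∘ Ψ.symm has zero derivative along the first coordinate
    have hderiv : ∀ t ∈ s, HasFDerivAt (fun t : ℝ => h (Ψ.symm (t, z))) (0 : ℝ →L[ℝ] ℝ) t := by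
      intro t ht
      have hyball : ((t, z) : ℝ × (Fin (n - 1) → ℝ)) ∈
          Metric.ball (c p, fun i => f i p) r := ht
      have hyt : ((t, z) : ℝ × (Fin (n - 1) → ℝ)) ∈ Ψ.target := (hrball hyball).1
      obtain ⟨hx₀W, hξ0, hbij⟩ := (hrball hyball).2
      obtain ⟨B, hB⟩ := hBex _ hbij
      have hsymmd : HasFDerivAt Ψ.symm
          ((B.symm : ℝ × (Fin (n - 1) → ℝ) →L[ℝ] (Fin n → ℝ))) (t, z) := by
        apply Ψ.hasFDerivAt_symm hyt
        rw [hB, hΨcoe]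
        exact hGd _ hx₀W
      have hcomp : HasFDerivAt (fun y : ℝ × (Fin (n - 1) → ℝ) => h (Ψ.symm y))
          ((fderiv ℝ h (Ψ.symm (t, z))).comp
            (B.symm : ℝ × (Fin (n - 1) → ℝ) →L[ℝ] (Fin n → ℝ))) (t, z) :=
        ((hhd _ hx₀W).hasFDerivAt).comp (t, z) hsymmd
      have hline : HasFDerivAt (fun t : ℝ => ((t, z) : ℝ × (Fin (n - 1) → ℝ)))
          ((ContinuousLinearMap.id ℝ ℝ).prod 0) t :=
        HasFDerivAt.prodMk (hasFDerivAt_id t) (hasFDerivAt_const z t)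
      have hw := hcomp.comp t hline
      have hzero : ((fderiv ℝ h (Ψ.symm (t, z))).comp
          (B.symm : ℝ × (Fin (n - 1) → ℝ) →L[ℝ] (Fin n → ℝ))).comp
          ((ContinuousLinearMap.id ℝ ℝ).prod 0) = 0 := by
        -- the kernel of the differentials of the f i is spanned by ξ
        have hAv : A (Ψ.symm (t, z)) (B.symm (1, 0)) = (1, 0) := by
          rw [← hB]
          exact B.apply_symm_apply (1, 0)
        rw [hAapp] at hAv
        have hMv : ∀ i, fderiv ℝ (f i) (Ψ.symm (t, z)) (B.symm (1, 0)) = 0 := fun i =>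
          congrFun (congrArg Prod.snd hAv) i
        set M : (Fin n → ℝ) →L[ℝ] (Fin (n - 1) → ℝ) :=
          ContinuousLinearMap.pi (fun i => fderiv ℝ (f i) (Ψ.symm (t, z))) with hMdef
        have hMapp : ∀ u, M u = fun i => fderiv ℝ (f i) (Ψ.symm (t, z)) u := fun u => rfl
        have hMsurj : Function.Surjective M := by
          intro wv
          obtain ⟨u, hu⟩ := hbij.2 (0, wv)
          rw [hAapp] at hu
          exact ⟨u, by rw [hMapp]; exact congrArg Prod.snd hu⟩
        have hrank := LinearMap.finrank_range_add_finrank_ker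
          ((M : (Fin n → ℝ) →ₗ[ℝ] (Fin (n - 1) → ℝ)))
        have hrtop : LinearMap.range ((M : (Fin n → ℝ) →ₗ[ℝ] (Fin (n - 1) → ℝ))) = ⊤ :=
          LinearMap.range_eq_top.mpr hMsurj
        rw [hrtop, finrank_top, Module.finrank_fin_fun, Module.finrank_fin_fun] at hrank
        have hker1 : Module.finrank ℝ
            (LinearMap.ker ((M : (Fin n → ℝ) →ₗ[ℝ] (Fin (n - 1) → ℝ)))) = 1 := by omega
        have hξker : ξ (Ψ.symm (t, z)) ∈
            LinearMap.ker ((M : (Fin n → ℝ) →ₗ[ℝ] (Fin (n - 1) → ℝ))) := by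
          rw [LinearMap.mem_ker]
          show M (ξ (Ψ.symm (t, z))) = 0
          rw [hMapp]
          funext i
          exact hker i _ hx₀W
        have hspan_le : Submodule.span ℝ {ξ (Ψ.symm (t, z))} ≤
            LinearMap.ker ((M : (Fin n → ℝ) →ₗ[ℝ] (Fin (n - 1) → ℝ))) := by
          rw [Submodule.span_le, Set.singleton_subset_iff]
          exact hξker
        have heqker : LinearMap.ker ((M : (Fin n → ℝ) →ₗ[ℝ] (Fin (n - 1) → ℝ))) =
            Submodule.span ℝ {ξ (Ψ.symm (t, z))} :=
          (Submodule.eq_of_le_of_finrank_le hspan_le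
            (by rw [hker1, finrank_span_singleton hξ0])).symm
        have hvker : (B.symm (1, 0) : Fin n → ℝ) ∈
            LinearMap.ker ((M : (Fin n → ℝ) →ₗ[ℝ] (Fin (n - 1) → ℝ))) := by
          rw [LinearMap.mem_ker]
          show M (B.symm (1, 0)) = 0
          rw [hMapp]
          funext i
          exact hMv i
        rw [heqker] at hvker
        obtain ⟨sc, hsc⟩ := Submodule.mem_span_singleton.mp hvker
        have hDh : fderiv ℝ h (Ψ.symm (t, z)) (B.symm (1, 0)) = 0 := by
          rw [← hsc, map_smul, hkerh _ hx₀W, smul_zero]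
        apply ContinuousLinearMap.ext
        intro u
        have h10 : ((u : ℝ), (0 : Fin (n - 1) → ℝ)) =
            u • ((1 : ℝ), (0 : Fin (n - 1) → ℝ)) := by simp
        simp only [ContinuousLinearMap.comp_apply, ContinuousLinearMap.prod_apply,
          ContinuousLinearMap.id_apply, ContinuousLinearMap.zero_apply,
          ContinuousLinearMap.coe_coe, ContinuousLinearMap.one_apply]
        rw [h10, map_smul, map_smul]
        simp [hDh]
      rwa [hzero] at hw
    -- conclude constancy along the segment
    have hdiff : DifferentiableOn ℝ (fun t : ℝ => h (Ψ.symm (t, z))) s :=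
      fun t ht => ((hderiv t ht).differentiableAt).differentiableWithinAt
    have hfd0 : ∀ t ∈ s, fderivWithin ℝ (fun t : ℝ => h (Ψ.symm (t, z))) s t = 0 := by
      intro t ht
      rw [fderivWithin_of_isOpen hsopen ht]
      exact (hderiv t ht).fderiv
    have hx1 : c x ∈ s := hx.2
    have hx2 : c x' ∈ s := by
      have : ((c x', z) : ℝ × (Fin (n - 1) → ℝ)) = (c x', fun i => f i x') := by
        rw [hff]
      show ((c x', z) : ℝ × (Fin (n - 1) → ℝ)) ∈ Metric.ball _ r
      rw [this]
      exact hx'.2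
    have hcc := hsconv.is_const_of_fderivWithin_eq_zero hdiff hfd0 hx1 hx2
    have e1 : Ψ.symm ((c x, z) : ℝ × (Fin (n - 1) → ℝ)) = x := hVsymm x hx
    have e2 : Ψ.symm ((c x', z) : ℝ × (Fin (n - 1) → ℝ)) = x' := by
      have : ((c x', z) : ℝ × (Fin (n - 1) → ℝ)) = (c x', fun i => f i x') := by
        rw [hff]
      rw [this]
      exact hVsymm x' hx'
    rw [e1, e2] at hcc
    exact hcc
  -- define Φ by choice
  refine ⟨V, hVopen, hpV, hVW,
    fun z => if hz : ∃ x, x ∈ V ∧ (fun i => f i x) = z then h hz.choose else 0, ?_⟩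
  intro x hx
  have hex : ∃ x', x' ∈ V ∧ (fun i => f i x') = (fun i => f i x) := ⟨x, hx, rfl⟩
  have hval : (fun z => if hz : ∃ x, x ∈ V ∧ (fun i => f i x) = z then h hz.choose else 0)
      (fun i => f i x) = h hex.choose := by
    simp only []
    rw [dif_pos hex]
  rw [hval]
  exact key x hx _ hex.choose_spec.1 hex.choose_spec.2.symm
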